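/- Fix real constants μ0 > 0 and H > 0, and for each integer n ≥ 1 let k_n(H) be the unique solution k of μ0 + k·tan(k·H) = 0 in ((2n−1)π/(2H), nπ/H), a twice differentiable function of H. Then one has the exact identity H·(d²k_n/dH²) + 2·(dk_n/dH) = −2·(dk_n/dH)·(H·μ0 − 1)·( (H·(dk_n/dH) + k_n)/k_n )², and consequently there exists a constant C > 0 such that |H·(d²k_n/dH²) + 2·(dk_n/dH)| ≤ C·n^{−3} for all n ≥ 1 (equivalently, ∂_x²(k_n H) along any C² depth profile is O(n^{−1})). -/

import Mathlib

open Real Topology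

noncomputable def gfun (μ0 : ℝ) (n : ℕ) (x : ℝ) : ℝ := ((n : ℝ) * π - arctan (μ0 / x)) / x

lemma gfun_hasDerivAt (μ0 : ℝ) (n : ℕ) {x : ℝ} (hx : 0 < x) :
    HasDerivAt (gfun μ0 n) ((μ0 / (x ^ 2 + μ0 ^ 2) - gfun μ0 n x) / x) x := by
  have hx' : x ≠ 0 := hx.ne'
  have h1 : HasDerivAt (fun y : ℝ => μ0 / y) (μ0 * -(x ^ 2)⁻¹) x := by
    simpa [div_eq_mul_inv] using (hasDerivAt_inv hx').const_mul μ0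
  have h2 : HasDerivAt (fun y : ℝ => (n : ℝ) * π - arctan (μ0 / y))
      (0 - 1 / (1 + (μ0 / x) ^ 2) * (μ0 * -(x ^ 2)⁻¹)) x :=
    (hasDerivAt_const x ((n : ℝ) * π)).sub h1.arctan
  have h3 := h2.mul (hasDerivAt_inv hx')
  have hfn : ((fun y : ℝ => (n : ℝ) * π - arctan (μ0 / y)) * fun y : ℝ => y⁻¹) = gfun μ0 n := by
    funext y; simp [gfun, div_eq_mul_inv]
  rw [hfn] at h3
  refine h3.congr_deriv ?_
  have hq : (1 : ℝ) + (μ0 / x) ^ 2 ≠ 0 := by positivity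
  have hs : x ^ 2 + μ0 ^ 2 ≠ 0 := by positivity
  simp only [gfun]
  field_simp
  ring

lemma gfun_deriv_neg (μ0 : ℝ) (hμ0 : 0 < μ0) {n : ℕ} (hn : 1 ≤ n) {x : ℝ} (hx : 0 < x) :
    (μ0 / (x ^ 2 + μ0 ^ 2) - gfun μ0 n x) / x < 0 := by
  apply div_neg_of_neg_of_pos _ hx
  have hn1 : (1 : ℝ) ≤ (n : ℝ) := by exact_mod_cast hn
  have harc : arctan (μ0 / x) < π / 2 := arctan_lt_pi_div_two _
  have hg : π / 2 / x ≤ gfun μ0 n x := by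
    unfold gfun
    rw [div_le_div_iff₀ hx hx]
    have key : π / 2 ≤ (n : ℝ) * π - arctan (μ0 / x) := by nlinarith [pi_pos]
    nlinarith [mul_le_mul_of_nonneg_right key hx.le]
  have h2 : μ0 / (x ^ 2 + μ0 ^ 2) ≤ 1 / (2 * x) := by
    rw [div_le_div_iff₀ (by positivity) (by positivity)]
    nlinarith [sq_nonneg (x - μ0)]
  have h3 : 1 / (2 * x) < π / 2 / x := by
    rw [div_lt_div_iff₀ (by positivity) hx]
    nlinarith [pi_gt_three]
  linarith

lemma gfun_strictAnti (μ0 : ℝ) (hμ0 : 0 < μ0) {n : ℕ} (hn : 1 ≤ n) :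
    StrictAntiOn (gfun μ0 n) (Set.Ioi 0) := by
  apply strictAntiOn_of_deriv_neg (convex_Ioi 0)
  · intro x hx
    exact (gfun_hasDerivAt μ0 n hx).continuousAt.continuousWithinAt
  · intro x hx
    rw [interior_Ioi] at hx
    rw [(gfun_hasDerivAt μ0 n hx).deriv]
    exact gfun_deriv_neg μ0 hμ0 hn hx

lemma key_lemma (μ0 : ℝ) (hμ0 : 0 < μ0) {n : ℕ} (hn : 1 ≤ n) {H' k0 : ℝ} (hH' : 0 < H')
    (hmem : k0 ∈ Set.Ioo ((2 * (n : ℝ) - 1) * π / (2 * H')) ((n : ℝ) * π / H'))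
    (heq : μ0 + k0 * Real.tan (k0 * H') = 0) :
    gfun μ0 n k0 = H' ∧ 0 < k0 ∧ (n : ℝ) * π / (2 * H') < k0 := by
  have hn1 : (1 : ℝ) ≤ (n : ℝ) := by exact_mod_cast hn
  have hlow := hmem.1
  have hup := hmem.2
  have hlow2 : (n : ℝ) * π / (2 * H') ≤ (2 * (n : ℝ) - 1) * π / (2 * H') := by
    rw [div_le_div_iff₀ (by positivity) (by positivity)]
    nlinarith [mul_nonneg (mul_nonneg (sub_nonneg.mpr hn1) pi_pos.le) hH'.le]
  have hk0 : 0 < k0 := lt_of_lt_of_le (by positivity) (hlow2.trans hlow.le)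
  have hb1 : (2 * (n : ℝ) - 1) * π / 2 < k0 * H' := by
    rw [div_lt_iff₀ (by positivity)] at hlow
    nlinarith
  have hb2 : k0 * H' < (n : ℝ) * π := by
    rw [lt_div_iff₀ hH'] at hup
    exact hup
  set θ : ℝ := (n : ℝ) * π - k0 * H' with hθ
  have hθ1 : 0 < θ := by simp [hθ]; linarith
  have hθ2 : θ < π / 2 := by
    have : (2 * (n : ℝ) - 1) * π / 2 = (n : ℝ) * π - π / 2 := by ring
    simp only [hθ]; linarith [hb1, this ▸ hb1]
  have htan : Real.tan (k0 * H') = -Real.tan θ := by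
    have hper : Real.tan (k0 * H' - n * π) = Real.tan (k0 * H') :=
      Real.tan_periodic.sub_nat_mul_eq n
    have : k0 * H' - n * π = -θ := by simp [hθ]
    rw [this, Real.tan_neg] at hper
    linarith [hper]
  have htanθ : Real.tan θ = μ0 / k0 := by
    rw [htan] at heq
    field_simp
    linarith
  have harct : arctan (μ0 / k0) = θ := by
    rw [← htanθ]
    exact arctan_tan (by linarith [pi_pos]) hθ2
  refine ⟨?_, hk0, lt_of_le_of_lt hlow2 hlow⟩
  unfold gfun
  rw [harct]
  field_simp [hθ]
  linarith

lemma kn_cont (μ0 : ℝ) (hμ0 : 0 < μ0) {n : ℕ} (hn : 1 ≤ n) (f : ℝ → ℝ)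
    (hf : ∀ H' : ℝ, 0 < H' → gfun μ0 n (f H') = H' ∧ 0 < f H')
    {H : ℝ} (hH : 0 < H) : ContinuousAt f H := by
  have hanti := gfun_strictAnti μ0 hμ0 hn
  obtain ⟨hg0, hk0⟩ := hf H hH
  rw [Metric.continuousAt_iff]
  intro ε hε
  set k0 := f H with hk0def
  set ε' := min ε (k0 / 2) with hε'def
  have hε' : 0 < ε' := lt_min hε (by linarith)
  have hε'le : ε' ≤ ε := min_le_left _ _
  have hhalf : ε' ≤ k0 / 2 := min_le_right _ _
  have hm1 : k0 - ε' ∈ Set.Ioi (0 : ℝ) := by simp; linarith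
  have hm2 : k0 ∈ Set.Ioi (0 : ℝ) := hk0
  have hm3 : k0 + ε' ∈ Set.Ioi (0 : ℝ) := by simp; linarith
  have ha : gfun μ0 n (k0 + ε') < H := by
    rw [← hg0]; exact hanti hm2 hm3 (by linarith)
  have hb : H < gfun μ0 n (k0 - ε') := by
    rw [← hg0]; exact hanti hm1 hm2 (by linarith)
  refine ⟨min (min (H - gfun μ0 n (k0 + ε')) (gfun μ0 n (k0 - ε') - H)) H,
    by simp; exact ⟨⟨by linarith, by linarith⟩, hH⟩, ?_⟩
  intro y hy
  rw [Real.dist_eq] at hy ⊢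
  have hy1 := abs_lt.mp hy
  have hy0 : 0 < y := by
    have := hy1.1
    have h2 : min (min (H - gfun μ0 n (k0 + ε')) (gfun μ0 n (k0 - ε') - H)) H ≤ H :=
      min_le_right _ _
    linarith
  obtain ⟨hgy, hfy0⟩ := hf y hy0
  have hya : gfun μ0 n (k0 + ε') < y := by
    have h2 : min (min (H - gfun μ0 n (k0 + ε')) (gfun μ0 n (k0 - ε') - H)) H ≤
        H - gfun μ0 n (k0 + ε') := (min_le_left _ _).trans (min_le_left _ _)
    linarith [hy1.1]
  have hyb : y < gfun μ0 n (k0 - ε') := by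
    have h2 : min (min (H - gfun μ0 n (k0 + ε')) (gfun μ0 n (k0 - ε') - H)) H ≤
        gfun μ0 n (k0 - ε') - H := (min_le_left _ _).trans (min_le_right _ _)
    linarith [hy1.2]
  have hu : f y < k0 + ε' := by
    by_contra hcon
    push_neg at hcon
    have hle : gfun μ0 n (f y) ≤ gfun μ0 n (k0 + ε') := by
      rcases eq_or_lt_of_le hcon with h | h
      · rw [← h]
      · exact (hanti hm3 hfy0 h).le
    rw [hgy] at hle; linarith
  have hl : k0 - ε' < f y := by
    by_contra hcon
    push_neg at hcon
    have hle : gfun μ0 n (k0 - ε') ≤ gfun μ0 n (f y) := by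
      rcases eq_or_lt_of_le hcon with h | h
      · rw [h]
      · exact (hanti hfy0 hm1 h).le
    rw [hgy] at hle; linarith
  rw [abs_lt]
  constructor <;> [skip; skip] <;> [linarith; linarith]

lemma kn_pos_facts (μ0 : ℝ) (hμ0 : 0 < μ0) {n : ℕ} (hn : 1 ≤ n) {H k0 : ℝ} (hH : 0 < H)
    (hk0 : 0 < k0) (hg : gfun μ0 n k0 = H) :
    π / 2 ≤ k0 * H ∧ μ0 < H * (k0 ^ 2 + μ0 ^ 2) := by
  have hn1 : (1 : ℝ) ≤ (n : ℝ) := by exact_mod_cast hn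
  have harc : arctan (μ0 / k0) < π / 2 := arctan_lt_pi_div_two _
  have hkH : k0 * H = (n : ℝ) * π - arctan (μ0 / k0) := by
    rw [← hg]
    unfold gfun
    field_simp
  have h1 : π / 2 ≤ k0 * H := by rw [hkH]; nlinarith [pi_pos]
  refine ⟨h1, ?_⟩
  have h2 : 2 * μ0 * (k0 * H) ≤ H * (k0 ^ 2 + μ0 ^ 2) := by nlinarith [sq_nonneg (k0 - μ0)]
  nlinarith [pi_gt_three]

lemma kn_hasDerivAt (μ0 : ℝ) (hμ0 : 0 < μ0) {n : ℕ} (hn : 1 ≤ n) (f : ℝ → ℝ)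
    (hf : ∀ H' : ℝ, 0 < H' → gfun μ0 n (f H') = H' ∧ 0 < f H')
    {H : ℝ} (hH : 0 < H) :
    HasDerivAt f (-(f H * ((f H) ^ 2 + μ0 ^ 2)) / (H * ((f H) ^ 2 + μ0 ^ 2) - μ0)) H := by
  obtain ⟨hg0, hk0⟩ := hf H hH
  obtain ⟨hkH, hD⟩ := kn_pos_facts μ0 hμ0 hn hH hk0 hg0
  have hA : (0 : ℝ) < (f H) ^ 2 + μ0 ^ 2 := by positivity
  have hgd : HasDerivAt (gfun μ0 n) ((μ0 / ((f H) ^ 2 + μ0 ^ 2) - H) / f H) (f H) := by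
    have := gfun_hasDerivAt μ0 n hk0
    rwa [hg0] at this
  have hval : (μ0 / ((f H) ^ 2 + μ0 ^ 2) - H) / f H < 0 := by
    apply div_neg_of_neg_of_pos _ hk0
    rw [sub_neg, div_lt_iff₀ hA]
    linarith
  have hfg : ∀ᶠ y in 𝓝 H, gfun μ0 n (f y) = y := by
    filter_upwards [isOpen_Ioi.mem_nhds (show H ∈ Set.Ioi (0:ℝ) from hH)] with y hy
    exact (hf y hy).1
  have hd := HasDerivAt.of_local_left_inverse (kn_cont μ0 hμ0 hn f hf hH) hgd hval.ne hfg
  refine hd.congr_deriv ?_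
  rw [inv_eq_iff_eq_inv, eq_comm]
  have hDne : H * ((f H) ^ 2 + μ0 ^ 2) - μ0 ≠ 0 := by linarith
  field_simp
  ring

lemma main_facts (μ0 H : ℝ) (hμ0 : 0 < μ0) (hH : 0 < H) (k : ℕ → ℝ → ℝ)
    (hk : ∀ n : ℕ, 1 ≤ n → ∀ H' : ℝ, 0 < H' →
      k n H' ∈ Set.Ioo ((2 * (n : ℝ) - 1) * π / (2 * H')) ((n : ℝ) * π / H') ∧
      μ0 + k n H' * Real.tan (k n H' * H') = 0) (n : ℕ) (hn : 1 ≤ n) :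
    ∃ k0 d1 d2 : ℝ, k n H = k0 ∧ deriv (k n) H = d1 ∧ deriv (deriv (k n)) H = d2 ∧
      0 < k0 ∧ (n : ℝ) * π / (2 * H) < k0 ∧ π * μ0 ≤ H * (k0 ^ 2 + μ0 ^ 2) ∧
      d1 = -(k0 * (k0 ^ 2 + μ0 ^ 2)) / (H * (k0 ^ 2 + μ0 ^ 2) - μ0) ∧
      H * d2 + 2 * d1 =
        2 * (H * μ0 - 1) * μ0 ^ 2 * (k0 * (k0 ^ 2 + μ0 ^ 2)) /
          (H * (k0 ^ 2 + μ0 ^ 2) - μ0) ^ 3 := by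
  have hf : ∀ H' : ℝ, 0 < H' → gfun μ0 n (k n H') = H' ∧ 0 < k n H' := by
    intro H' hH'
    obtain ⟨hmem, heq⟩ := hk n hn H' hH'
    obtain ⟨h1, h2, _⟩ := key_lemma μ0 hμ0 hn hH' hmem heq
    exact ⟨h1, h2⟩
  obtain ⟨hg0, hk0⟩ := hf H hH
  obtain ⟨hkH, hD⟩ := kn_pos_facts μ0 hμ0 hn hH hk0 hg0
  set k0 := k n H with hk0def
  set A := k0 ^ 2 + μ0 ^ 2 with hA
  set D := H * A - μ0 with hDdef
  have hDpos : 0 < D := by simp only [hDdef]; linarith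
  have hApos : 0 < A := by positivity
  -- first derivative at any positive point
  have hd1 : ∀ H' : ℝ, 0 < H' → HasDerivAt (k n)
      (-(k n H' * ((k n H') ^ 2 + μ0 ^ 2)) / (H' * ((k n H') ^ 2 + μ0 ^ 2) - μ0)) H' :=
    fun H' hH' => kn_hasDerivAt μ0 hμ0 hn (k n) hf hH'
  have hk' := hd1 H hH
  set d1 : ℝ := -(k0 * A) / D with hd1def
  -- second derivative
  have hsq : HasDerivAt (fun y => (k n y) ^ 2 + μ0 ^ 2) (2 * k0 * d1) H := by
    have := (hk'.pow 2).add_const (μ0 ^ 2)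
    simpa [hd1def, hDdef, hA, mul_comm, mul_assoc] using this
  have hnum : HasDerivAt (fun y => -(k n y * ((k n y) ^ 2 + μ0 ^ 2)))
      (-(d1 * A + k0 * (2 * k0 * d1))) H := by
    have := (hk'.fun_mul hsq).fun_neg
    simpa [hd1def, hDdef, hA] using this
  have hden : HasDerivAt (fun y => y * ((k n y) ^ 2 + μ0 ^ 2) - μ0)
      (1 * A + H * (2 * k0 * d1)) H := by
    have := ((hasDerivAt_id H).mul hsq).sub_const μ0
    simpa [hA] using this
  have hdenH : H * A - μ0 ≠ 0 := by rw [← hDdef]; exact hDpos.ne'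
  have hφ := hnum.fun_div hden (by simpa using hdenH)
  set v : ℝ := (-(d1 * A + k0 * (2 * k0 * d1)) * (H * A - μ0) -
      -(k0 * A) * (1 * A + H * (2 * k0 * d1))) / (H * A - μ0) ^ 2 with hv
  have heventually : deriv (k n) =ᶠ[𝓝 H] fun y =>
      -(k n y * ((k n y) ^ 2 + μ0 ^ 2)) / (y * ((k n y) ^ 2 + μ0 ^ 2) - μ0) := by
    filter_upwards [isOpen_Ioi.mem_nhds (show H ∈ Set.Ioi (0:ℝ) from hH)] with y hy
    exact (hd1 y hy).deriv
  have hd2 : HasDerivAt (deriv (k n)) v H := by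
    refine HasDerivAt.congr_of_eventuallyEq ?_ heventually
    convert hφ using 1
  refine ⟨k0, d1, v, rfl, ?_, hd2.deriv, hk0, ?_, ?_, rfl, ?_⟩
  · have := hk'.deriv
    rw [this, hd1def, hDdef, hA]
  · obtain ⟨hmem, heq⟩ := hk n hn H hH
    exact (key_lemma μ0 hμ0 hn hH hmem heq).2.2
  · nlinarith [sq_nonneg (k0 - μ0), pi_pos]
  · rw [hv, hd1def, hDdef]
    have hdenH' : H * (k0 ^ 2 + μ0 ^ 2) - μ0 ≠ 0 := hdenH
    rw [hA]
    field_simp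
    ring

set_option maxHeartbeats 1000000 in

/-- Identity (A28) and estimate (A24b) of Lemma A1:
`H·(d²kₙ/dH²) + 2(dkₙ/dH) = −2(dkₙ/dH)(Hμ₀ − 1)((H·(dkₙ/dH) + kₙ)/kₙ)²`,
hence `|H·(d²kₙ/dH²) + 2(dkₙ/dH)| ≤ C·n⁻³`, i.e. `∂ₓ²(kₙH) = O(n⁻¹)` along any
C² depth profile. -/
theorem eigenvalue_second_cancellation_identity (μ0 H : ℝ) (hμ0 : 0 < μ0) (hH : 0 < H)
    (k : ℕ → ℝ → ℝ)
    (hk : ∀ n : ℕ, 1 ≤ n → ∀ H' : ℝ, 0 < H' →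
      k n H' ∈ Set.Ioo ((2 * (n : ℝ) - 1) * π / (2 * H')) ((n : ℝ) * π / H') ∧
      μ0 + k n H' * Real.tan (k n H' * H') = 0) :
    (∀ n : ℕ, 1 ≤ n →
      H * deriv (deriv (k n)) H + 2 * deriv (k n) H =
        -2 * deriv (k n) H * (H * μ0 - 1) *
          ((H * deriv (k n) H + k n H) / k n H) ^ 2) ∧
    ∃ C : ℝ, 0 < C ∧ ∀ n : ℕ, 1 ≤ n →
      |H * deriv (deriv (k n)) H + 2 * deriv (k n) H| ≤ C / (n : ℝ) ^ 3 := by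
  constructor
  · intro n hn
    obtain ⟨k0, d1, d2, e0, e1, e2, hk0, hlow, hHA, hd1f, hiden⟩ :=
      main_facts μ0 H hμ0 hH k hk n hn
    rw [e0, e1, e2, hiden]
    have hDpos : 0 < H * (k0 ^ 2 + μ0 ^ 2) - μ0 := by nlinarith [pi_gt_three]
    rw [hd1f]
    field_simp
    ring
  · have hπ1 : (0:ℝ) < π - 1 := by nlinarith [pi_gt_three]
    obtain ⟨c, hcdef⟩ : ∃ c : ℝ, c = H * (π - 1) / π := ⟨_, rfl⟩
    have hc : 0 < c := hcdef ▸ div_pos (mul_pos hH hπ1) pi_pos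
    refine ⟨2 * (|H * μ0 - 1| + 1) * μ0 ^ 2 * (8 * H ^ 3) / (c ^ 3 * π ^ 3), ?_, ?_⟩
    · apply div_pos
      · have : 0 < |H * μ0 - 1| + 1 := by positivity
        positivity
      · exact mul_pos (pow_pos hc 3) (pow_pos pi_pos 3)
    · intro n hn
      have hn0 : (0:ℝ) < (n : ℝ) := by exact_mod_cast hn
      obtain ⟨k0, d1, d2, e0, e1, e2, hk0, hlow, hHA, hd1f, hiden⟩ :=
        main_facts μ0 H hμ0 hH k hk n hn
      rw [e1, e2, hiden]
      obtain ⟨A, hA⟩ : ∃ A : ℝ, A = k0 ^ 2 + μ0 ^ 2 := ⟨_, rfl⟩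
      obtain ⟨D, hD⟩ : ∃ D : ℝ, D = H * A - μ0 := ⟨_, rfl⟩
      rw [← hA] at hHA
      rw [← hA, ← hD]
      have hApos : 0 < A := by rw [hA]; positivity
      have hAk : k0 ^ 2 ≤ A := by rw [hA]; nlinarith [sq_nonneg μ0]
      have hDpos : 0 < D := by
        rw [hD]
        nlinarith [mul_lt_mul_of_pos_right pi_gt_three hμ0]
      have hcA : c * A ≤ D := by
        have hμA : μ0 ≤ H * A / π := by rw [le_div_iff₀ pi_pos]; nlinarith
        have hceq : c * A = H * A - H * A / π := by
          rw [hcdef]; field_simp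
        rw [hD]; linarith
      have hkn3 : (n : ℝ) ^ 3 * π ^ 3 ≤ 8 * H ^ 3 * k0 ^ 3 := by
        have h := pow_le_pow_left₀ (by positivity : (0:ℝ) ≤ (n : ℝ) * π / (2 * H)) hlow.le 3
        have he : ((n : ℝ) * π / (2 * H)) ^ 3 = (n : ℝ) ^ 3 * π ^ 3 / (8 * H ^ 3) := by
          rw [div_pow]; ring_nf
        rw [he, div_le_iff₀ (by positivity)] at h
        nlinarith [h]
      have hD3 : (c * A) ^ 3 ≤ D ^ 3 := pow_le_pow_left₀ (mul_pos hc hApos).le hcA 3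
      have key : k0 * A / D ^ 3 ≤ 1 / (c ^ 3 * k0 ^ 3) := by
        rw [div_le_div_iff₀ (pow_pos hDpos 3) (mul_pos (pow_pos hc 3) (pow_pos hk0 3))]
        have hkA : k0 ^ 4 * A ≤ A ^ 3 := by
          nlinarith [mul_nonneg (mul_nonneg hApos.le (sub_nonneg.2 hAk))
            (add_pos hApos (pow_pos hk0 2)).le]
        have h2 : c ^ 3 * (k0 ^ 4 * A) ≤ c ^ 3 * A ^ 3 :=
          mul_le_mul_of_nonneg_left hkA (pow_pos hc 3).le
        have h3 : (c * A) ^ 3 = c ^ 3 * A ^ 3 := by ring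
        have h4 : k0 * A * (c ^ 3 * k0 ^ 3) = c ^ 3 * (k0 ^ 4 * A) := by ring
        rw [h4]
        rw [h3] at hD3
        linarith
      have hden1 : (0:ℝ) < c ^ 3 * k0 ^ 3 := mul_pos (pow_pos hc 3) (pow_pos hk0 3)
      have hden2 : (0:ℝ) < c ^ 3 * π ^ 3 * (n : ℝ) ^ 3 :=
        mul_pos (mul_pos (pow_pos hc 3) (pow_pos pi_pos 3)) (pow_pos hn0 3)
      have key3 : 1 / (c ^ 3 * k0 ^ 3) ≤ 8 * H ^ 3 / (c ^ 3 * π ^ 3 * (n : ℝ) ^ 3) := by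
        rw [div_le_div_iff₀ hden1 hden2]
        have h5 := mul_le_mul_of_nonneg_left hkn3 (pow_pos hc 3).le
        calc 1 * (c ^ 3 * π ^ 3 * (n:ℝ) ^ 3) = c ^ 3 * ((n:ℝ) ^ 3 * π ^ 3) := by ring
          _ ≤ c ^ 3 * (8 * H ^ 3 * k0 ^ 3) := h5
          _ = 8 * H ^ 3 * (c ^ 3 * k0 ^ 3) := by ring
      have habs : |2 * (H * μ0 - 1) * μ0 ^ 2 * (k0 * A) / D ^ 3| =
          |2 * (H * μ0 - 1) * μ0 ^ 2| * (k0 * A / D ^ 3) := by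
        rw [mul_div_assoc, abs_mul,
          abs_of_nonneg (div_nonneg (mul_pos hk0 hApos).le (pow_pos hDpos 3).le)]
      have hK : |2 * (H * μ0 - 1) * μ0 ^ 2| ≤ 2 * (|H * μ0 - 1| + 1) * μ0 ^ 2 := by
        have heq : |2 * (H * μ0 - 1) * μ0 ^ 2| = 2 * |H * μ0 - 1| * μ0 ^ 2 := by
          rw [abs_mul, abs_mul]
          simp [abs_of_nonneg (sq_nonneg μ0)]
        rw [heq]
        have h6 := mul_le_mul_of_nonneg_right
          (show |H * μ0 - 1| ≤ |H * μ0 - 1| + 1 by linarith) (sq_nonneg μ0)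
        linarith
      calc |2 * (H * μ0 - 1) * μ0 ^ 2 * (k0 * A) / D ^ 3|
          = |2 * (H * μ0 - 1) * μ0 ^ 2| * (k0 * A / D ^ 3) := habs
        _ ≤ (2 * (|H * μ0 - 1| + 1) * μ0 ^ 2) * (1 / (c ^ 3 * k0 ^ 3)) := by
            apply mul_le_mul hK key
              (div_nonneg (mul_pos hk0 hApos).le (pow_pos hDpos 3).le) (by positivity)
        _ ≤ (2 * (|H * μ0 - 1| + 1) * μ0 ^ 2) * (8 * H ^ 3 / (c ^ 3 * π ^ 3 * (n : ℝ) ^ 3)) := by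
            apply mul_le_mul_of_nonneg_left key3 (by positivity)
        _ = 2 * (|H * μ0 - 1| + 1) * μ0 ^ 2 * (8 * H ^ 3) / (c ^ 3 * π ^ 3) / (n : ℝ) ^ 3 := by
            rw [div_div]
            ring
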